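/- Let G = (V,E) be an infinite (g,o)-growing graph with g ≥ 1. Then for every finite nonempty subset C ⊆ V one has |∂↓C| − |∂↗C| ≥ g|C|, where ∂↓C is the set of edges of the edge boundary of C whose endpoint in C lies in some level L_j and whose other endpoint lies in L_{j+1}, and ∂↗C is the set of remaining edges of the edge boundary of C. -/

import Mathlib

/- Common framework: Ising model with boundary conditions on (finite pieces of)
   locally finite graphs, heat-bath Glauber dynamics quantities. -/

open Finset
open scoped Classical

noncomputable section

namespace IsingGlauber

/-- The real spin value of a Boolean spin: `true ↦ +1`, `false ↦ -1`. -/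
def spin (b : Bool) : ℝ := if b then 1 else -1

variable {V : Type*}

/-- Neighbourhood finset of a vertex, from an explicit local finiteness witness. -/
def nbr (G : SimpleGraph V) (hlf : G.LocallyFinite) (x : V) : Finset V :=
  @SimpleGraph.neighborFinset V G x (hlf x)

/-- `G` is `(g,o)`-growing: every vertex `x` (say at distance `r` from `o`) has at
    least `g` more neighbours in level `r+1` than in the ball of radius `r`. -/
def IsGrowing (G : SimpleGraph V) (hlf : G.LocallyFinite) (g : ℕ) (o : V) : Prop :=
  ∀ x : V,
    ((nbr G hlf x).filter fun z => G.dist o z ≤ G.dist o x).card + g ≤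
      ((nbr G hlf x).filter fun z => G.dist o z = G.dist o x + 1).card

variable [DecidableEq V]

/-- External vertex boundary of a finite vertex set. -/
def vbd (G : SimpleGraph V) (hlf : G.LocallyFinite) (A : Finset V) : Finset V :=
  A.biUnion (fun a => nbr G hlf a) \ A

/-- Closure `A ∪ ∂_V A` of a finite vertex set. -/
def cl (G : SimpleGraph V) (hlf : G.LocallyFinite) (A : Finset V) : Finset V :=
  A ∪ vbd G hlf A

/-- Ising Hamiltonian (zero field) with boundary: `Σ_{(x,y) ∈ E(A ∪ ∂_V A)} σ_x σ_y`,
    the sum over edges with both endpoints in `A ∪ ∂_V A` (each edge counted once). -/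
def energyB (G : SimpleGraph V) (hlf : G.LocallyFinite) (A : Finset V) (σ : V → Bool) : ℝ :=
  (1 / 2) * ∑ x ∈ cl G hlf A, ∑ y ∈ (cl G hlf A).filter (fun y => G.Adj x y),
    spin (σ x) * spin (σ y)

/-- Free-boundary Ising Hamiltonian: `Σ_{(x,y) ∈ E(A)} σ_x σ_y`,
    the sum over edges with both endpoints in `A` (each edge counted once). -/
def energyF (G : SimpleGraph V) (A : Finset V) (σ : V → Bool) : ℝ :=
  (1 / 2) * ∑ x ∈ A, ∑ y ∈ A.filter (fun y => G.Adj x y), spin (σ x) * spin (σ y)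

/-- The configuration equal to `p` on `A` and to `η` off `A`. -/
def patch (A : Finset V) (η : V → Bool) (p : ∀ a ∈ A, Bool) : V → Bool :=
  fun v => if h : v ∈ A then p v h else η v

/-- Unnormalised Gibbs sum over configurations agreeing with `η` off `A`,
    with energy functional `E` (which should already include the factor `β`). -/
def wsum (E : (V → Bool) → ℝ) (A : Finset V) (η : V → Bool) (f : (V → Bool) → ℝ) : ℝ :=
  ∑ p ∈ A.pi (fun _ => (Finset.univ : Finset Bool)),
    Real.exp (E (patch A η p)) * f (patch A η p)

/-- Gibbs expectation of `f` for the measure on region `A` with boundary condition `η`. -/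
def gExp (E : (V → Bool) → ℝ) (A : Finset V) (η : V → Bool) (f : (V → Bool) → ℝ) : ℝ :=
  wsum E A η f / wsum E A η (fun _ => 1)

/-- Gibbs probability of an event. -/
def gProb (E : (V → Bool) → ℝ) (A : Finset V) (η : V → Bool) (P : (V → Bool) → Prop) : ℝ :=
  gExp E A η (fun σ => if P σ then 1 else 0)

/-- Gibbs variance of `f`. -/
def gVar (E : (V → Bool) → ℝ) (A : Finset V) (η : V → Bool) (f : (V → Bool) → ℝ) : ℝ :=
  gExp E A η (fun σ => f σ ^ 2) - gExp E A η f ^ 2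

/-- Dirichlet form of the heat-bath Glauber dynamics:
    `D(f) = Σ_{x ∈ A} μ(Var_x(f))`, where `Var_x(f)(σ)` is the variance of `f`
    under the one-site conditional Gibbs measure at `x` given `σ` elsewhere. -/
def dirich (E : (V → Bool) → ℝ) (A : Finset V) (η : V → Bool) (f : (V → Bool) → ℝ) : ℝ :=
  ∑ x ∈ A, gExp E A η (fun σ => gVar E {x} σ f)

/-- Spectral gap `c_gap(μ) = inf { D(f)/Var(f) : Var(f) ≠ 0 }`. -/
def cgap (E : (V → Bool) → ℝ) (A : Finset V) (η : V → Bool) : ℝ :=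
  sInf {r : ℝ | ∃ f : (V → Bool) → ℝ, gVar E A η f ≠ 0 ∧ r = dirich E A η f / gVar E A η f}

/-- The edge boundary of `C`, encoded as ordered pairs `(u,v)` with `u ∈ C`,
    `v ∉ C` and `u ~ v`; these pairs are in bijection with the boundary edges. -/
def obd (G : SimpleGraph V) (hlf : G.LocallyFinite) (C : Finset V) : Finset (V × V) :=
  (C ×ˢ C.biUnion (fun c => nbr G hlf c)).filter (fun p => G.Adj p.1 p.2 ∧ p.2 ∉ C)

end IsingGlauber

open IsingGlauber

section Proof7

open IsingGlauber

variable {V : Type*} [DecidableEq V]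

lemma mem_nbr {G : SimpleGraph V} {hlf : G.LocallyFinite} {x v : V} :
    v ∈ nbr G hlf x ↔ G.Adj x v := by
  simp [nbr, SimpleGraph.mem_neighborFinset]

lemma dist_nbr_le {G : SimpleGraph V} (hconn : G.Connected) {o x v : V}
    (h : G.Adj x v) : G.dist o v ≤ G.dist o x + 1 := by
  have := hconn.dist_triangle (u := o) (v := x) (w := v)
  have h1 : G.dist x v = 1 := SimpleGraph.dist_eq_one_iff_adj.mpr h
  omega

end Proof7

/-- in an infinite `(g,o)`-growing graph, for every finite nonempty
`C ⊆ V` one has `|∂↓C| - |∂↗C| ≥ g|C|`, where `∂↓C` are the boundary edges of `C`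
going from a level `L_j` (inside `C`) down to level `L_{j+1}`, and `∂↗C` the
remaining boundary edges. -/
theorem statement7 {V : Type*} [DecidableEq V] [Infinite V]
    (G : SimpleGraph V) (hlf : G.LocallyFinite) (hconn : G.Connected)
    (g : ℕ) (hg : 1 ≤ g) (o : V)
    (hgrow : IsGrowing G hlf g o)
    (C : Finset V) (hC : C.Nonempty) :
    (g : ℤ) * (C.card : ℤ) ≤
      (((obd G hlf C).filter (fun p => G.dist o p.2 = G.dist o p.1 + 1)).card : ℤ) -
        (((obd G hlf C).filter (fun p => ¬ G.dist o p.2 = G.dist o p.1 + 1)).card : ℤ) := by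
  classical
  set inP : V → Finset V := fun u =>
    (nbr G hlf u).filter (fun v => G.dist o v = G.dist o u + 1 ∧ v ∈ C) with hinP
  set inM : V → Finset V := fun u =>
    (nbr G hlf u).filter (fun v => ¬ G.dist o v = G.dist o u + 1 ∧ v ∈ C) with hinM
  set outP : V → Finset V := fun u =>
    (nbr G hlf u).filter (fun v => G.dist o v = G.dist o u + 1 ∧ v ∉ C) with houtP
  set outM : V → Finset V := fun u =>
    (nbr G hlf u).filter (fun v => ¬ G.dist o v = G.dist o u + 1 ∧ v ∉ C) with houtM
  -- per-vertex growing inequality, split by membership in C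
  have key : ∀ u : V, (inM u).card + (outM u).card + g ≤ (inP u).card + (outP u).card := by
    intro u
    have hg := hgrow u
    have h1 := Finset.card_filter_add_card_filter_not
      (s := (nbr G hlf u).filter (fun v => G.dist o v = G.dist o u + 1)) (p := fun v => v ∈ C)
    have h2 := Finset.card_filter_add_card_filter_not
      (s := (nbr G hlf u).filter (fun v => ¬ G.dist o v = G.dist o u + 1)) (p := fun v => v ∈ C)
    simp only [Finset.filter_filter] at h1 h2
    have heq : (nbr G hlf u).filter (fun z => G.dist o z ≤ G.dist o u)
        = (nbr G hlf u).filter (fun v => ¬ G.dist o v = G.dist o u + 1) := by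
      apply Finset.filter_congr
      intro z hz
      have hle := dist_nbr_le hconn (G := G) (o := o) (mem_nbr.mp hz)
      constructor
      · intro h3; omega
      · intro h3; omega
    rw [heq] at hg
    simp only [hinP, hinM, houtP, houtM]
    omega
  -- internal edges: ∑ inP ≤ ∑ inM by the reversal injection
  have hinternal : ∑ u ∈ C, (inP u).card ≤ ∑ u ∈ C, (inM u).card := by
    rw [← Finset.card_sigma, ← Finset.card_sigma]
    apply Finset.card_le_card_of_injOn (f := fun p => ⟨p.2, p.1⟩)
    · intro p hp
      simp only [Finset.mem_coe, Finset.mem_sigma, hinP, hinM, Finset.mem_filter, mem_nbr] at hp ⊢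
      obtain ⟨hu, ⟨hadj, hdist, hvC⟩⟩ := hp
      refine ⟨hvC, hadj.symm, ?_, hu⟩
      omega
    · rintro ⟨a, b⟩ _ ⟨c, d⟩ _ h
      injection h with h1 h2
      simp only [heq_eq_eq] at h2
      subst h1; subst h2; rfl
  -- boundary edge counts
  have hdown : (((obd G hlf C).filter
      (fun p => G.dist o p.2 = G.dist o p.1 + 1))).card = ∑ u ∈ C, (outP u).card := by
    rw [← Finset.card_sigma]
    apply Finset.card_bij (fun p _ => (⟨p.1, p.2⟩ : Σ _ : V, V))
    · intro p hp
      simp only [obd, Finset.mem_filter, Finset.mem_product, Finset.mem_biUnion,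
        mem_nbr] at hp
      simp only [Finset.mem_sigma, houtP, Finset.mem_filter, mem_nbr]
      tauto
    · rintro ⟨a, b⟩ _ ⟨c, d⟩ _ h
      injection h with h1 h2
      simp only [heq_eq_eq] at h2
      subst h1; subst h2; rfl
    · rintro ⟨u, v⟩ hs
      simp only [Finset.mem_sigma, houtP, Finset.mem_filter, mem_nbr] at hs
      refine ⟨(u, v), ?_, rfl⟩
      simp only [obd, Finset.mem_filter, Finset.mem_product, Finset.mem_biUnion, mem_nbr]
      exact ⟨⟨⟨hs.1, ⟨u, hs.1, hs.2.1⟩⟩, hs.2.1, hs.2.2.2⟩, hs.2.2.1⟩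
  have hup : (((obd G hlf C).filter
      (fun p => ¬ G.dist o p.2 = G.dist o p.1 + 1))).card = ∑ u ∈ C, (outM u).card := by
    rw [← Finset.card_sigma]
    apply Finset.card_bij (fun p _ => (⟨p.1, p.2⟩ : Σ _ : V, V))
    · intro p hp
      simp only [obd, Finset.mem_filter, Finset.mem_product, Finset.mem_biUnion,
        mem_nbr] at hp
      simp only [Finset.mem_sigma, houtM, Finset.mem_filter, mem_nbr]
      tauto
    · rintro ⟨a, b⟩ _ ⟨c, d⟩ _ h
      injection h with h1 h2
      simp only [heq_eq_eq] at h2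
      subst h1; subst h2; rfl
    · rintro ⟨u, v⟩ hs
      simp only [Finset.mem_sigma, houtM, Finset.mem_filter, mem_nbr] at hs
      refine ⟨(u, v), ?_, rfl⟩
      simp only [obd, Finset.mem_filter, Finset.mem_product, Finset.mem_biUnion, mem_nbr]
      exact ⟨⟨⟨hs.1, ⟨u, hs.1, hs.2.1⟩⟩, hs.2.1, hs.2.2.2⟩, hs.2.2.1⟩
  -- sum the per-vertex inequality over C
  have hsum : ∑ u ∈ C, ((inM u).card + (outM u).card + g)
      ≤ ∑ u ∈ C, ((inP u).card + (outP u).card) :=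
    Finset.sum_le_sum fun u _ => key u
  simp only [Finset.sum_add_distrib, Finset.sum_const, smul_eq_mul] at hsum
  have hnat : ∑ u ∈ C, (outM u).card + C.card * g ≤ ∑ u ∈ C, (outP u).card := by
    omega
  rw [hdown, hup]
  zify at hnat
  push_cast
  linarith [hnat]
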